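/- Let P_i, Q_i (1 ≤ i ≤ n) be differential operators with each Q_i nonzero of order ℓ_i. Then there exists a differential operator L_r of order at most ℓ_1+⋯+ℓ_n such that P_k Q_k^{-1} P_{k-1} Q_{k-1}^{-1} ⋯ P_1 Q_1^{-1} L_r is a differential operator for every 1 ≤ k ≤ n. -/

import Mathlib

/- Ordinary differential operators with coefficients in ℂ[[x]], realized as
ℂ-linear endomorphisms of ℂ[[x]] generated by multiplication operators and d/dx. -/

noncomputable section

abbrev PS := PowerSeries ℂ

/-- Multiplication by a power series, as a ℂ-linear endomorphism of ℂ[[x]]. -/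
def mulOp (u : PS) : Module.End ℂ PS :=
  { toFun := fun g => u * g
    map_add' := mul_add u
    map_smul' := by intros; exact (Algebra.mul_smul_comm _ _ _) }

/-- Formal differentiation ∂ₓ as a ℂ-linear endomorphism of ℂ[[x]]. -/
def derOp : Module.End ℂ PS := (PowerSeries.derivative (R := ℂ)).toLinearMap

/-- The space of ordinary differential operators of order at most `n`:
the ℂ-span of the operators `u(x) ∘ ∂ₓ^i`, `i ≤ n`. -/
def Dfil (n : ℕ) : Submodule ℂ (Module.End ℂ PS) :=
  Submodule.span ℂ {L | ∃ (u : PS) (i : ℕ), i ≤ n ∧ L = mulOp u * derOp ^ i}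

/-- The algebra `D = ℂ[[x]][∂ₓ]` of ordinary differential operators. -/
def DiffOps : Subalgebra ℂ (Module.End ℂ PS) :=
  Algebra.adjoin ℂ (Set.range mulOp ∪ {derOp})

/-- The order of a differential operator (junk value for non-differential operators). -/
def ordD (L : Module.End ℂ PS) : ℕ := sInf {n | L ∈ Dfil n}

/-- A differential operator is monic if its leading coefficient is `1`, i.e. if
subtracting `∂ₓ^(ord L)` lowers the order (for order `0` this means `L = 1`). -/
def MonicD (L : Module.End ℂ PS) : Prop :=
  L ∈ Dfil (ordD L) ∧
    (if ordD L = 0 then L = 1 else L - derOp ^ ordD L ∈ Dfil (ordD L - 1))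

/-- Evaluation of a two-variable polynomial `F(z,w)` at a pair of elements of a
(not necessarily commutative) ℂ-algebra, with all `z`-powers placed to the left. -/
def eval2 {A : Type*} [Ring A] [Algebra ℂ A] (F : MvPolynomial (Fin 2) ℂ) (P Q : A) : A :=
  (AddMonoidAlgebra.coeff F).sum fun m c => c • (P ^ m 0 * Q ^ m 1)

/- The skew field of fractions of `D`. Since `D` is an Ore domain, it embeds in a division
ring `K` in which every element is a right fraction `a * b⁻¹` of differential operators.
We work with an arbitrary such embedding `ι : DiffOps →+* K`. -/

/-- The order of a fractional differential operator `u = a b⁻¹`, namely `ord a - ord b`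
(this is independent of the chosen presentation; junk value `0` if no presentation exists). -/
def fordK {K : Type*} [DivisionRing K] (ι : DiffOps →+* K) (u : K) : ℤ :=
  letI := Classical.propDecidable
  if h : ∃ a b : DiffOps, a ≠ 0 ∧ b ≠ 0 ∧ u = ι a * (ι b)⁻¹ then
    (ordD (h.choose : Module.End ℂ PS) : ℤ) -
      (ordD (h.choose_spec.choose : Module.End ℂ PS) : ℤ)
  else 0

/-- The denominatorial order of a fractional differential operator: the minimal order of a
nonzero differential operator `L` such that `u · L` is a differential operator. -/
def dordK {K : Type*} [DivisionRing K] (ι : DiffOps →+* K) (u : K) : ℕ :=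
  sInf {n : ℕ | ∃ L : DiffOps, L ≠ 0 ∧ ordD (L : Module.End ℂ PS) = n ∧
    ∃ A : DiffOps, u * ι L = ι A}

/-- A fractional differential operator is monic if it is a fraction of two monic
differential operators (equivalently, its leading coefficient is `1`). -/
def MonicK {K : Type*} [DivisionRing K] (ι : DiffOps →+* K) (u : K) : Prop :=
  ∃ a b : DiffOps, b ≠ 0 ∧ MonicD (a : Module.End ℂ PS) ∧ MonicD (b : Module.End ℂ PS) ∧
    u = ι a * (ι b)⁻¹

/-- The iterated product `g(k) * g(k-1) * ⋯ * g(0)` in a division ring. -/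
def chainProd {K : Type*} [DivisionRing K] (g : ℕ → K) : ℕ → K
  | 0 => g 0
  | k + 1 => g (k + 1) * chainProd g k

set_option synthInstance.maxHeartbeats 1000000
set_option maxHeartbeats 2000000

-- basic lemmas
lemma mulOp_apply (u g : PS) : mulOp u g = u * g := rfl

lemma mulOp_zero : mulOp 0 = 0 := by ext g; simp [mulOp_apply]

lemma mulOp_add (u v : PS) : mulOp (u + v) = mulOp u + mulOp v := by
  ext g; simp [mulOp_apply, add_mul]

lemma mulOp_sub (u v : PS) : mulOp (u - v) = mulOp u - mulOp v := by
  ext g; simp [mulOp_apply, sub_mul]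

lemma mulOp_smul (c : ℂ) (u : PS) : mulOp (c • u) = c • mulOp u := by
  ext g; simp [mulOp_apply, smul_mul_assoc]

lemma mulOp_mul (u v : PS) : mulOp (u * v) = mulOp u * mulOp v := by
  ext g; simp [mulOp_apply, Module.End.mul_apply, mul_assoc]

lemma mulOp_one : mulOp 1 = 1 := by
  ext g; simp [mulOp_apply]

lemma mulOp_eq_zero {u : PS} (h : mulOp u = 0) : u = 0 := by
  have := LinearMap.congr_fun h 1
  simpa [mulOp_apply] using this

lemma der_mulOp (u : PS) :
    derOp * mulOp u = mulOp u * derOp + mulOp (PowerSeries.derivative (R := ℂ) u) := by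
  refine LinearMap.ext fun g => ?_
  show (PowerSeries.derivative (R := ℂ)) (u * g)
      = u * (PowerSeries.derivative (R := ℂ)) g + (PowerSeries.derivative (R := ℂ) u) * g
  rw [Derivation.leibniz]
  simp [smul_eq_mul]
  ring
-- Dfil filtration lemmas
lemma dfil_mono {m n : ℕ} (h : m ≤ n) : Dfil m ≤ Dfil n := by
  apply Submodule.span_mono
  rintro L ⟨u, i, hi, rfl⟩
  exact ⟨u, i, le_trans hi h, rfl⟩

lemma gen_mem_dfil {i n : ℕ} (u : PS) (h : i ≤ n) : mulOp u * derOp ^ i ∈ Dfil n :=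
  Submodule.subset_span ⟨u, i, h, rfl⟩

lemma mulOp_mem_dfil (u : PS) {n : ℕ} : mulOp u ∈ Dfil n := by
  have : mulOp u = mulOp u * derOp ^ 0 := by rw [pow_zero, mul_one]
  rw [this]; exact gen_mem_dfil u (Nat.zero_le n)

lemma one_mem_dfil {n : ℕ} : (1 : Module.End ℂ PS) ∈ Dfil n := by
  rw [← mulOp_one]; exact mulOp_mem_dfil 1

lemma derOp_mul_mem {n : ℕ} {L : Module.End ℂ PS} (hL : L ∈ Dfil n) :
    derOp * L ∈ Dfil (n + 1) := by
  induction hL using Submodule.span_induction with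
  | mem x hx =>
    obtain ⟨u, i, hi, rfl⟩ := hx
    have : derOp * (mulOp u * derOp ^ i)
        = mulOp u * derOp ^ (i + 1) + mulOp (PowerSeries.derivative (R := ℂ) u) * derOp ^ i := by
      rw [← mul_assoc, der_mulOp, add_mul, mul_assoc, ← pow_succ']
    rw [this]
    exact Submodule.add_mem _ (gen_mem_dfil _ (by omega)) (gen_mem_dfil _ (by omega))
  | zero => simp
  | add x y _ _ hx hy => rw [mul_add]; exact Submodule.add_mem _ hx hy
  | smul c x _ hx => rw [mul_smul_comm]; exact Submodule.smul_mem _ _ hx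

lemma derOp_pow_mul_mem {n : ℕ} (j : ℕ) {L : Module.End ℂ PS} (hL : L ∈ Dfil n) :
    derOp ^ j * L ∈ Dfil (n + j) := by
  induction j with
  | zero => simpa using hL
  | succ j ih =>
    have : derOp ^ (j+1) * L = derOp * (derOp ^ j * L) := by
      rw [← mul_assoc, ← pow_succ']
    rw [this, show n + (j+1) = (n+j) + 1 by omega]
    exact derOp_mul_mem ih

lemma mulOp_mul_mem {n : ℕ} (u : PS) {L : Module.End ℂ PS} (hL : L ∈ Dfil n) :
    mulOp u * L ∈ Dfil n := by
  induction hL using Submodule.span_induction with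
  | mem x hx =>
    obtain ⟨v, i, hi, rfl⟩ := hx
    rw [← mul_assoc, ← mulOp_mul]
    exact gen_mem_dfil _ hi
  | zero => simp
  | add x y _ _ hx hy => rw [mul_add]; exact Submodule.add_mem _ hx hy
  | smul c x _ hx => rw [mul_smul_comm]; exact Submodule.smul_mem _ _ hx

lemma dfil_mul_mem {a b : ℕ} {L M : Module.End ℂ PS} (hL : L ∈ Dfil a) (hM : M ∈ Dfil b) :
    L * M ∈ Dfil (a + b) := by
  induction hL using Submodule.span_induction with
  | mem x hx =>
    obtain ⟨u, i, hi, rfl⟩ := hx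
    rw [mul_assoc]
    have h1 : derOp ^ i * M ∈ Dfil (b + i) := derOp_pow_mul_mem i hM
    have h2 := mulOp_mul_mem u h1
    exact dfil_mono (by omega) h2
  | zero => simp
  | add x y _ _ hx hy => rw [add_mul]; exact Submodule.add_mem _ hx hy
  | smul c x _ hx => rw [smul_mul_assoc]; exact Submodule.smul_mem _ _ hx

lemma pow_mulOp_mem (i : ℕ) (u : PS) : derOp ^ i * mulOp u ∈ Dfil i := by
  have := derOp_pow_mul_mem (n := 0) i (mulOp_mem_dfil u)
  simpa using this

lemma dfil_le_diffOps {n : ℕ} {L : Module.End ℂ PS} (hL : L ∈ Dfil n) : L ∈ DiffOps := by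
  induction hL using Submodule.span_induction with
  | mem x hx =>
    obtain ⟨u, i, hi, rfl⟩ := hx
    refine mul_mem ?_ (pow_mem ?_ i)
    · exact Algebra.subset_adjoin (Or.inl ⟨u, rfl⟩)
    · exact Algebra.subset_adjoin (Or.inr rfl)
  | zero => exact zero_mem _
  | add x y _ _ hx hy => exact add_mem hx hy
  | smul c x _ hx => exact Subalgebra.smul_mem _ hx c

lemma exists_dfil {L : Module.End ℂ PS} (hL : L ∈ DiffOps) : ∃ n, L ∈ Dfil n := by
  induction hL using Algebra.adjoin_induction with
  | mem x hx =>
    rcases hx with ⟨u, rfl⟩ | hx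
    · exact ⟨0, mulOp_mem_dfil u⟩
    · rw [Set.mem_singleton_iff] at hx; subst hx
      refine ⟨1, ?_⟩
      have : derOp = mulOp 1 * derOp ^ 1 := by rw [mulOp_one, one_mul, pow_one]
      rw [this]; exact gen_mem_dfil 1 le_rfl
  | algebraMap r =>
    refine ⟨0, ?_⟩
    rw [Algebra.algebraMap_eq_smul_one]
    exact Submodule.smul_mem _ _ one_mem_dfil
  | add x y _ _ hx hy =>
    obtain ⟨a, ha⟩ := hx; obtain ⟨b, hb⟩ := hy
    exact ⟨max a b, Submodule.add_mem _ (dfil_mono (le_max_left a b) ha)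
      (dfil_mono (le_max_right a b) hb)⟩
  | mul x y _ _ hx hy =>
    obtain ⟨a, ha⟩ := hx; obtain ⟨b, hb⟩ := hy
    exact ⟨a + b, dfil_mul_mem ha hb⟩
-- right normal forms
def crepF (m : ℕ) (f : ℕ → PS) : Module.End ℂ PS :=
  ∑ i ∈ Finset.range (m + 1), derOp ^ i * mulOp (f i)

lemma crepF_mem {m : ℕ} (f : ℕ → PS) : crepF m f ∈ Dfil m := by
  apply Submodule.sum_mem
  intro i hi
  exact dfil_mono (by simpa using Nat.lt_succ_iff.mp (Finset.mem_range.mp hi)) (pow_mulOp_mem i (f i))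

lemma crepF_add (m : ℕ) (f g : ℕ → PS) :
    crepF m (fun j => f j + g j) = crepF m f + crepF m g := by
  unfold crepF
  rw [← Finset.sum_add_distrib]
  refine Finset.sum_congr rfl fun i _ => ?_
  rw [mulOp_add, mul_add]

lemma crepF_sub (m : ℕ) (f g : ℕ → PS) :
    crepF m (fun j => f j - g j) = crepF m f - crepF m g := by
  unfold crepF
  rw [← Finset.sum_sub_distrib]
  refine Finset.sum_congr rfl fun i _ => ?_
  rw [mulOp_sub, mul_sub]

lemma crepF_smul (m : ℕ) (c : ℂ) (f : ℕ → PS) :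
    crepF m (fun j => c • f j) = c • crepF m f := by
  unfold crepF
  rw [Finset.smul_sum]
  refine Finset.sum_congr rfl fun i _ => ?_
  rw [mulOp_smul, mul_smul_comm]

lemma crepF_mulC (m : ℕ) (c : PS) (f : ℕ → PS) :
    crepF m (fun j => f j * c) = crepF m f * mulOp c := by
  unfold crepF
  rw [Finset.sum_mul]
  refine Finset.sum_congr rfl fun i _ => ?_
  rw [mulOp_mul, mul_assoc]

lemma crepF_zero (m : ℕ) : crepF m (fun _ => 0) = 0 := by
  unfold crepF
  simp [mulOp_zero]

-- commutator with multiplication by X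
lemma pow_mulX (i : ℕ) : derOp ^ (i + 1) * mulOp PowerSeries.X
    = mulOp PowerSeries.X * derOp ^ (i + 1) + (i + 1) • derOp ^ i := by
  induction i with
  | zero =>
    have := der_mulOp PowerSeries.X
    rw [PowerSeries.derivative_X, mulOp_one] at this
    simpa using this
  | succ i ih =>
    have h1 : derOp ^ (i + 2) * mulOp PowerSeries.X
        = derOp * (derOp ^ (i + 1) * mulOp PowerSeries.X) := by
      rw [← mul_assoc, ← pow_succ']
    rw [h1, ih, mul_add, ← mul_assoc, der_mulOp, PowerSeries.derivative_X, mulOp_one]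
    rw [add_mul, one_mul, mul_assoc, ← pow_succ']
    rw [mul_smul_comm, ← pow_succ']
    rw [succ_nsmul ((derOp : Module.End ℂ PS) ^ (i+1)) (i+1)]
    abel

lemma crepF_inj : ∀ (m : ℕ) (f : ℕ → PS), crepF m f = 0 → ∀ i ≤ m, f i = 0 := by
  intro m
  induction m with
  | zero =>
    intro f h i hi
    interval_cases i
    have h0 : crepF 0 f = mulOp (f 0) := by
      unfold crepF; simp
    exact mulOp_eq_zero (by rw [← h0, h])
  | succ m ih =>
    intro f h
    have hcomm : crepF m (fun j => (((j : ℕ) + 1 : ℕ) : ℂ) • f (j + 1)) = 0 := by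
      have h2 : crepF (m+1) f * mulOp PowerSeries.X
          - mulOp PowerSeries.X * crepF (m+1) f = 0 := by rw [h]; simp
      have h3 : crepF (m+1) f * mulOp PowerSeries.X - mulOp PowerSeries.X * crepF (m+1) f
          = ∑ i ∈ Finset.range (m+2),
            ((derOp ^ i * mulOp (f i)) * mulOp PowerSeries.X
              - mulOp PowerSeries.X * (derOp ^ i * mulOp (f i))) := by
        unfold crepF
        rw [Finset.sum_mul, Finset.mul_sum, ← Finset.sum_sub_distrib]
      have hterm : ∀ i : ℕ,
          (derOp ^ (i+1) * mulOp (f (i+1))) * mulOp PowerSeries.X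
            - mulOp PowerSeries.X * (derOp ^ (i+1) * mulOp (f (i+1)))
          = derOp ^ i * mulOp ((((i : ℕ) + 1 : ℕ) : ℂ) • f (i + 1)) := by
        intro i
        have c1 : (derOp ^ (i+1) * mulOp (f (i+1))) * mulOp PowerSeries.X
            = (derOp ^ (i+1) * mulOp PowerSeries.X) * mulOp (f (i+1)) := by
          rw [mul_assoc, mul_assoc, ← mulOp_mul, ← mulOp_mul, mul_comm (f (i+1))]
        rw [c1, pow_mulX, add_mul, mul_assoc]
        have : ((i:ℕ)+1) • (derOp ^ i) * mulOp (f (i+1))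
            = derOp ^ i * mulOp ((((i : ℕ) + 1 : ℕ) : ℂ) • f (i + 1)) := by
          rw [smul_mul_assoc, mulOp_smul, mul_smul_comm, Nat.cast_smul_eq_nsmul]
        rw [this]
        abel
      rw [h3, Finset.sum_range_succ'] at h2
      have h0term : (derOp ^ 0 * mulOp (f 0)) * mulOp PowerSeries.X
          - mulOp PowerSeries.X * (derOp ^ 0 * mulOp (f 0)) = 0 := by
        simp only [pow_zero, one_mul]
        rw [← mulOp_mul, ← mulOp_mul, mul_comm, sub_self]
      rw [h0term, add_zero] at h2
      rw [← h2]
      unfold crepF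
      refine Finset.sum_congr rfl fun i _ => ?_
      rw [hterm i]
    have hsucc : ∀ j ≤ m, f (j + 1) = 0 := by
      intro j hj
      have := ih _ hcomm j hj
      have hc : (((j : ℕ) + 1 : ℕ) : ℂ) ≠ 0 := by
        have : ((j + 1 : ℕ) : ℂ) ≠ 0 := Nat.cast_ne_zero.mpr (Nat.succ_ne_zero j)
        simpa using this
      exact (smul_eq_zero.mp this).resolve_left hc
    intro i hi
    match i with
    | (j + 1) => exact hsucc j (by omega)
    | 0 =>
      have h4 : crepF (m+1) f
          = (∑ i ∈ Finset.range (m+1), derOp ^ (i+1) * mulOp (f (i+1))) + mulOp (f 0) := by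
        unfold crepF
        rw [Finset.sum_range_succ']
        simp
      have h5 : ∀ i ∈ Finset.range (m+1), derOp ^ (i+1) * mulOp (f (i+1)) = 0 := by
        intro i hi2
        rw [hsucc i (Nat.lt_succ_iff.mp (Finset.mem_range.mp hi2)), mulOp_zero, mul_zero]
      rw [Finset.sum_congr rfl h5, Finset.sum_const_zero, zero_add] at h4
      exact mulOp_eq_zero (by rw [← h4, h])

lemma crepF_eq_inj {m : ℕ} {f g : ℕ → PS} (h : crepF m f = crepF m g) :
    ∀ i ≤ m, f i = g i := by
  intro i hi
  have := crepF_inj m (fun j => f j - g j) (by rw [crepF_sub, h, sub_self]) i hi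
  exact sub_eq_zero.mp this
lemma rightform_tight : ∀ (i : ℕ) (u : PS), ∃ f : ℕ → PS,
    (∀ j, i < j → f j = 0) ∧ crepF i f = mulOp u * derOp ^ i := by
  intro i
  induction i with
  | zero =>
    intro u
    refine ⟨fun j => if j = 0 then u else 0, ?_, ?_⟩
    · intro j hj
      simp only []
      rw [if_neg (by omega : ¬ j = 0)]
    · unfold crepF; simp
  | succ i ih =>
    intro u
    obtain ⟨f₁, hf₁v, hf₁⟩ := ih u
    obtain ⟨f₂, hf₂v, hf₂⟩ := ih (PowerSeries.derivative (R := ℂ) u)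
    set s : ℕ → PS := fun j => match j with | 0 => 0 | k+1 => f₁ k with hs
    refine ⟨fun j => s j - f₂ j, ?_, ?_⟩
    · intro j hj
      match j, hj with
      | (k+1), hj =>
        have h1 : f₁ k = 0 := hf₁v k (by omega)
        have h2 : f₂ (k+1) = 0 := hf₂v (k+1) (by omega)
        simp [hs, h1, h2]
    · have hshift : crepF (i+1) s = derOp * crepF i f₁ := by
        unfold crepF
        rw [Finset.sum_range_succ']
        simp only [hs]
        rw [mulOp_zero, mul_zero, add_zero, Finset.mul_sum]
        refine Finset.sum_congr rfl fun j _ => ?_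
        rw [← mul_assoc, ← pow_succ']
      have hpad : crepF (i+1) f₂ = crepF i f₂ := by
        unfold crepF
        rw [Finset.sum_range_succ, hf₂v (i+1) (by omega), mulOp_zero, mul_zero, add_zero]
      rw [crepF_sub, hshift, hpad, hf₁, hf₂]
      rw [← mul_assoc, der_mulOp, add_mul, mul_assoc, ← pow_succ']
      abel

lemma rightform {m : ℕ} {L : Module.End ℂ PS} (hL : L ∈ Dfil m) :
    ∃ f : ℕ → PS, crepF m f = L := by
  induction hL using Submodule.span_induction with
  | mem x hx =>
    obtain ⟨u, i, hi, rfl⟩ := hx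
    obtain ⟨f, hfv, hf⟩ := rightform_tight i u
    refine ⟨f, ?_⟩
    rw [← hf]
    unfold crepF
    symm
    apply Finset.sum_subset
    · intro j hj
      simp only [Finset.mem_range] at *
      omega
    · intro j _ hj
      simp only [Finset.mem_range] at hj
      rw [hfv j (by omega), mulOp_zero, mul_zero]
  | zero => exact ⟨fun _ => 0, crepF_zero m⟩
  | add x y _ _ hx hy =>
    obtain ⟨f, hf⟩ := hx; obtain ⟨g, hg⟩ := hy
    exact ⟨fun j => f j + g j, by rw [crepF_add, hf, hg]⟩
  | smul c x _ hx =>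
    obtain ⟨f, hf⟩ := hx
    exact ⟨fun j => c • f j, by rw [crepF_smul, hf]⟩
def toN {n : ℕ} (f : Fin (n + 1) → PS) : ℕ → PS :=
  fun j => if h : j < n + 1 then f ⟨j, h⟩ else 0

lemma toN_coe {n : ℕ} (f : Fin (n + 1) → PS) (j : Fin (n + 1)) : toN f (j : ℕ) = f j := by
  simp [toN, j.isLt]

lemma toN_add {n : ℕ} (f g : Fin (n + 1) → PS) :
    toN (f + g) = fun j => toN f j + toN g j := by
  funext j; unfold toN; split <;> simp

lemma toN_smul {n : ℕ} (c : PS) (f : Fin (n + 1) → PS) :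
    toN (c • f) = fun j => toN f j * c := by
  funext j; unfold toN; split <;> simp [smul_eq_mul, mul_comm]

lemma ore_lemma (A Q : DiffOps) (a l : ℕ) (hA : (A : Module.End ℂ PS) ∈ Dfil a)
    (hQ : (Q : Module.End ℂ PS) ∈ Dfil l) :
    ∃ Y X : DiffOps, (Y : Module.End ℂ PS) ∈ Dfil l ∧ A * Y = Q * X ∧ (Y ≠ 0 ∨ X ≠ 0) := by
  classical
  set T := a + l with hT
  set W : (Fin (l + 1) → PS) × (Fin (a + 1) → PS) → Module.End ℂ PS :=
    fun p => (A : Module.End ℂ PS) * crepF l (toN p.1)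
      - (Q : Module.End ℂ PS) * crepF a (toN p.2) with hWdef
  have hW : ∀ p, W p ∈ Dfil T := by
    intro p
    refine Submodule.sub_mem _ (dfil_mul_mem hA (crepF_mem _)) ?_
    exact dfil_mono (by omega) (dfil_mul_mem hQ (crepF_mem (toN p.2)))
  set cho : (Fin (l + 1) → PS) × (Fin (a + 1) → PS) → ℕ → PS :=
    fun p => Classical.choose (rightform (hW p)) with hchodef
  have hcho : ∀ p, crepF T (cho p) = W p := fun p => Classical.choose_spec (rightform (hW p))
  have Wadd : ∀ p q, W (p + q) = W p + W q := by
    intro p q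
    show (A : Module.End ℂ PS) * crepF l (toN (p.1 + q.1))
        - (Q : Module.End ℂ PS) * crepF a (toN (p.2 + q.2)) = _
    rw [toN_add, toN_add, crepF_add, crepF_add, mul_add, mul_add]
    show _ = (A : Module.End ℂ PS) * crepF l (toN p.1)
      - (Q : Module.End ℂ PS) * crepF a (toN p.2)
      + ((A : Module.End ℂ PS) * crepF l (toN q.1)
      - (Q : Module.End ℂ PS) * crepF a (toN q.2))
    abel
  have Wsmul : ∀ (c : PS) p, W (c • p) = W p * mulOp c := by
    intro c p
    show (A : Module.End ℂ PS) * crepF l (toN (c • p.1))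
        - (Q : Module.End ℂ PS) * crepF a (toN (c • p.2)) = _
    rw [toN_smul, toN_smul, crepF_mulC, crepF_mulC]
    show _ = ((A : Module.End ℂ PS) * crepF l (toN p.1)
      - (Q : Module.End ℂ PS) * crepF a (toN p.2)) * mulOp c
    rw [sub_mul, mul_assoc, mul_assoc]
  let Phi : ((Fin (l + 1) → PS) × (Fin (a + 1) → PS)) →ₗ[PS] (Fin (T + 1) → PS) :=
    { toFun := fun p => fun j => cho p (j : ℕ)
      map_add' := by
        intro p q
        funext j
        have h1 : crepF T (cho (p + q)) = crepF T (fun i => cho p i + cho q i) := by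
          rw [crepF_add, hcho, hcho, hcho, Wadd]
        exact crepF_eq_inj h1 (j : ℕ) (Nat.lt_succ_iff.mp j.isLt)
      map_smul' := by
        intro c p
        funext j
        have h1 : crepF T (cho (c • p)) = crepF T (fun i => cho p i * c) := by
          rw [crepF_mulC, hcho, hcho, Wsmul]
        have h2 := crepF_eq_inj h1 (j : ℕ) (Nat.lt_succ_iff.mp j.isLt)
        simp only [RingHom.id_apply, Pi.smul_apply, smul_eq_mul]
        rw [h2, mul_comm] }
  have hker : ∃ p, p ≠ 0 ∧ Phi p = 0 := by
    by_contra hc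
    push_neg at hc
    have hinj2 : Function.Injective Phi := by
      rw [← LinearMap.ker_eq_bot, LinearMap.ker_eq_bot']
      intro p hp
      by_contra h0
      exact hc p h0 hp
    let E := (LinearEquiv.funCongrLeft PS PS finSumFinEquiv).trans
      (LinearEquiv.sumArrowLequivProdArrow (Fin (l + 1)) (Fin (a + 1)) PS PS)
    have hinj3 : Function.Injective (Phi ∘ₗ E.toLinearMap) := by
      exact hinj2.comp E.injective
    have hle := le_of_fin_injective PS _ hinj3
    omega
  obtain ⟨p, hp0, hpker⟩ := hker
  have hWp : W p = 0 := by
    rw [← hcho p]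
    unfold crepF
    have hz : ∀ i ∈ Finset.range (T + 1), derOp ^ i * mulOp (cho p i) = 0 := by
      intro i hi
      have hi' : i < T + 1 := Finset.mem_range.mp hi
      have he : cho p i = Phi p ⟨i, hi'⟩ := rfl
      rw [he, hpker]
      simp [mulOp_zero]
    rw [Finset.sum_congr rfl hz, Finset.sum_const_zero]
  have heq : (A : Module.End ℂ PS) * crepF l (toN p.1)
      = (Q : Module.End ℂ PS) * crepF a (toN p.2) := by
    have := sub_eq_zero.mp hWp
    exact this
  refine ⟨⟨crepF l (toN p.1), dfil_le_diffOps (crepF_mem _)⟩,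
    ⟨crepF a (toN p.2), dfil_le_diffOps (crepF_mem _)⟩, crepF_mem _, ?_, ?_⟩
  · rw [Subtype.ext_iff]
    simpa using heq
  · have h12 : p.1 ≠ 0 ∨ p.2 ≠ 0 := by
      by_contra hb; push_neg at hb
      exact hp0 (Prod.ext hb.1 hb.2)
    rcases h12 with h1 | h2
    · left
      intro hY0
      apply h1
      funext j
      have hz : crepF l (toN p.1) = 0 := by
        simpa using congrArg Subtype.val hY0
      have h3 := crepF_inj l (toN p.1) hz (j : ℕ) (Nat.lt_succ_iff.mp j.isLt)
      show p.1 j = 0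
      rw [← toN_coe p.1 j]
      exact h3
    · right
      intro hX0
      apply h2
      funext j
      have hz : crepF a (toN p.2) = 0 := by
        simpa using congrArg Subtype.val hX0
      have h3 := crepF_inj a (toN p.2) hz (j : ℕ) (Nat.lt_succ_iff.mp j.isLt)
      show p.2 j = 0
      rw [← toN_coe p.2 j]
      exact h3

lemma mem_dfil_ordD {L : Module.End ℂ PS} (h : L ∈ DiffOps) : L ∈ Dfil (ordD L) :=
  Nat.sInf_mem (exists_dfil h)


/-- **common right denominators.** Given differential operators `P i`, `Q i`
(`0 ≤ i < n`) with each `Q i` nonzero of order `ℓ i`, there is a nonzero differential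
operator `L_r` of order at most `ℓ 0 + ⋯ + ℓ (n-1)` such that
`P k Q k⁻¹ ⋯ P 0 Q 0⁻¹ L_r` is a differential operator for every `k < n`. -/
theorem common_right_denominator {K : Type*} [DivisionRing K] (ι : DiffOps →+* K)
    (hinj : Function.Injective ι)
    (hfrac : ∀ u : K, ∃ a b : DiffOps, b ≠ 0 ∧ u = ι a * (ι b)⁻¹)
    (n : ℕ) (hn : 0 < n) (P Q : ℕ → DiffOps) (ℓ : ℕ → ℕ)
    (hQ0 : ∀ i, i < n → Q i ≠ 0)
    (hQord : ∀ i, i < n → ordD (Q i : Module.End ℂ PS) = ℓ i) :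
    ∃ Lr : DiffOps, Lr ≠ 0 ∧
      ordD (Lr : Module.End ℂ PS) ≤ ∑ i ∈ Finset.range n, ℓ i ∧
      ∀ k, k < n → ∃ A : DiffOps,
        chainProd (fun i => ι (P i) * (ι (Q i))⁻¹) k * ι Lr = ι A := by
  have hιne : ∀ (b : DiffOps), b ≠ 0 → ι b ≠ 0 := by
    intro b hb h0
    exact hb (hinj (by rw [h0, map_zero]))
  set g : ℕ → K := fun i => ι (P i) * (ι (Q i))⁻¹ with hg
  have key : ∀ k, k < n → ∃ L : DiffOps, L ≠ 0 ∧
      (L : Module.End ℂ PS) ∈ Dfil (∑ i ∈ Finset.range (k + 1), ℓ i) ∧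
      ∀ j, j ≤ k → ∃ A : DiffOps, chainProd g j * ι L = ι A := by
    intro k
    induction k with
    | zero =>
      intro hk
      refine ⟨Q 0, hQ0 0 hk, ?_, ?_⟩
      · rw [Finset.sum_range_one, ← hQord 0 hk]
        exact mem_dfil_ordD (Q 0).2
      · intro j hj
        interval_cases j
        refine ⟨P 0, ?_⟩
        show (ι (P 0) * (ι (Q 0))⁻¹) * ι (Q 0) = ι (P 0)
        rw [mul_assoc, inv_mul_cancel₀ (hιne _ (hQ0 0 hk)), mul_one]
    | succ k ih =>
      intro hk
      obtain ⟨L, hL0, hLmem, hLden⟩ := ih (by omega)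
      obtain ⟨Ak, hAk⟩ := hLden k le_rfl
      obtain ⟨aA, haA⟩ := exists_dfil Ak.2
      have hQmem : ((Q (k + 1) : DiffOps) : Module.End ℂ PS) ∈ Dfil (ℓ (k + 1)) := by
        rw [← hQord (k + 1) hk]
        exact mem_dfil_ordD (Q (k + 1)).2
      obtain ⟨Y, X, hYmem, hEq, hne⟩ := ore_lemma Ak (Q (k + 1)) aA (ℓ (k + 1)) haA hQmem
      have hQne : ι (Q (k + 1)) ≠ 0 := hιne _ (hQ0 (k + 1) hk)
      have hY0 : Y ≠ 0 := by
        intro hY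
        subst hY
        rw [mul_zero] at hEq
        have h5 : ι (Q (k + 1)) * ι X = 0 := by
          rw [← map_mul, ← hEq, map_zero]
        rcases mul_eq_zero.mp h5 with h | h
        · exact hQne h
        · have hX : X = 0 := hinj (by rw [h, map_zero])
          rcases hne with h' | h'
          · exact h' rfl
          · exact h' hX
      refine ⟨L * Y, ?_, ?_, ?_⟩
      · intro h0
        have h5 : ι L * ι Y = 0 := by rw [← map_mul, h0, map_zero]
        rcases mul_eq_zero.mp h5 with h | h
        · exact hιne _ hL0 h
        · exact hιne _ hY0 h
      · have hc : ((L * Y : DiffOps) : Module.End ℂ PS)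
            = (L : Module.End ℂ PS) * (Y : Module.End ℂ PS) := rfl
        rw [hc, Finset.sum_range_succ]
        exact dfil_mul_mem hLmem hYmem
      · intro j hj
        rcases Nat.lt_or_ge j (k + 1) with hj' | hj'
        · obtain ⟨Aj, hAj⟩ := hLden j (by omega)
          refine ⟨Aj * Y, ?_⟩
          rw [map_mul, map_mul, ← mul_assoc, hAj]
        · have hjeq : j = k + 1 := by omega
          subst hjeq
          refine ⟨P (k + 1) * X, ?_⟩
          have hchain : chainProd g (k + 1) = g (k + 1) * chainProd g k := rfl
          rw [hchain, map_mul, map_mul]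
          calc (g (k + 1) * chainProd g k) * (ι L * ι Y)
              = g (k + 1) * ((chainProd g k * ι L) * ι Y) := by
                rw [mul_assoc (g (k + 1)) (chainProd g k) (ι L * ι Y),
                  ← mul_assoc (chainProd g k) (ι L) (ι Y)]
            _ = g (k + 1) * (ι Ak * ι Y) := by rw [hAk]
            _ = g (k + 1) * ι (Ak * Y) := by rw [map_mul]
            _ = g (k + 1) * ι (Q (k + 1) * X) := by rw [hEq]
            _ = (ι (P (k + 1)) * (ι (Q (k + 1)))⁻¹) * (ι (Q (k + 1)) * ι X) := by
                rw [map_mul]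
            _ = ι (P (k + 1)) * (((ι (Q (k + 1)))⁻¹ * ι (Q (k + 1))) * ι X) := by
                rw [mul_assoc (ι (P (k + 1))) ((ι (Q (k + 1)))⁻¹) (ι (Q (k + 1)) * ι X),
                  ← mul_assoc ((ι (Q (k + 1)))⁻¹) (ι (Q (k + 1))) (ι X)]
            _ = ι (P (k + 1)) * ι X := by
                rw [inv_mul_cancel₀ hQne, one_mul]
  obtain ⟨Lr, hLr0, hLrmem, hLrden⟩ := key (n - 1) (by omega)
  refine ⟨Lr, hLr0, ?_, ?_⟩
  · have he : (n - 1) + 1 = n := by omega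
    rw [he] at hLrmem
    exact Nat.sInf_le hLrmem
  · intro k hk
    exact hLrden k (by omega)
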